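/- For d ≥ 1, c ≥ 2: if every coloring C : [0,M]^d → c of d-element subsets of {0,…,M} admits a C-weakly homogeneous set of size m+1, then every coloring C : [0, 2^(M^(d+1))]^(d+1) → c admits a C-weakly homogeneous set of size m+1. In other words, wr_c^d(m) ≤ M implies wr_c^(d+1)(m) ≤ 2^(M^(d+1)). -/

import Mathlib

/-- `WHCd d C s h`: `h 0 < h 1 < ⋯ < h (s-1)` is weakly homogeneous for the
`d`-dimensional coloring `C`: consecutive `d`-tuples receive equal colors. -/
def WHCd (d : ℕ) (C : (Fin d → ℕ) → ℕ) (s : ℕ) (h : ℕ → ℕ) : Prop :=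
  (∀ i, i + 1 < s → h i < h (i + 1)) ∧
  (∀ i, i + d < s → C (fun t => h (i + t)) = C (fun t => h (i + 1 + t)))

/-- `wrdAt d c R m`: every coloring of increasing `d`-tuples from `[0,R]` in `c`
colors admits a weakly homogeneous set of size `m + 1`. -/
def wrdAt (d c R m : ℕ) : Prop :=
  ∀ C : (Fin d → ℕ) → ℕ, (∀ x, C x < c) →
    ∃ h : ℕ → ℕ, (∀ i, i < m + 1 → h i ≤ R) ∧ WHCd d C (m + 1) h


/-- Largest `i` with `x / 2^i ≠ y / 2^i` (for `x < y`): position of highest differing bit. -/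
def dlt (x y : ℕ) : ℕ := Nat.findGreatest (fun i => x / 2^i ≠ y / 2^i) y

lemma dlt_spec {x y : ℕ} (hxy : x < y) : x / 2 ^ dlt x y ≠ y / 2 ^ dlt x y := by
  have h0 : x / 2 ^ 0 ≠ y / 2 ^ 0 := by simpa using hxy.ne
  exact Nat.findGreatest_spec (P := fun i => x / 2^i ≠ y / 2^i) (Nat.zero_le y) h0

lemma dlt_succ {x y : ℕ} (hxy : x < y) :
    x / 2 ^ (dlt x y + 1) = y / 2 ^ (dlt x y + 1) := by
  rcases le_or_gt (dlt x y + 1) y with hle | hgt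
  · by_contra hne
    exact Nat.findGreatest_is_greatest (P := fun i => x / 2^i ≠ y / 2^i) (Nat.lt_succ_self _) hle hne
  · have hy : y < 2 ^ (dlt x y + 1) := by
      calc y < 2 ^ y := (Nat.lt_two_pow_self (n := y))
      _ ≤ 2 ^ (dlt x y + 1) := Nat.pow_le_pow_right (by norm_num) (by omega)
    rw [Nat.div_eq_of_lt (lt_trans hxy hy), Nat.div_eq_of_lt hy]

lemma dlt_lt {x y n : ℕ} (hxy : x < y) (hy : y < 2 ^ n) : dlt x y < n := by
  by_contra hge
  push_neg at hge
  have h2 : y < 2 ^ dlt x y := lt_of_lt_of_le hy (Nat.pow_le_pow_right (by norm_num) hge)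
  exact dlt_spec hxy (by rw [Nat.div_eq_of_lt (lt_trans hxy h2), Nat.div_eq_of_lt h2])

lemma dlt_ne {x y z : ℕ} (hxy : x < y) (hyz : y < z) : dlt x y ≠ dlt y z := by
  intro heq
  set i := dlt x y with hi
  have e1 : x / 2 ^ (i+1) = y / 2 ^ (i+1) := dlt_succ hxy
  have e2 : y / 2 ^ (i+1) = z / 2 ^ (i+1) := by rw [heq] at hi ⊢; exact dlt_succ hyz
  have n1 : x / 2 ^ i ≠ y / 2 ^ i := dlt_spec hxy
  have n2 : y / 2 ^ i ≠ z / 2 ^ i := by rw [heq] at hi ⊢; exact dlt_spec hyz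
  have l1 : x / 2 ^ i < y / 2 ^ i := lt_of_le_of_ne (Nat.div_le_div_right hxy.le) n1
  have l2 : y / 2 ^ i < z / 2 ^ i := lt_of_le_of_ne (Nat.div_le_div_right hyz.le) n2
  have d1 : x / 2 ^ (i+1) = x / 2 ^ i / 2 := by rw [pow_succ, Nat.div_div_eq_div_mul]
  have d2 : y / 2 ^ (i+1) = y / 2 ^ i / 2 := by rw [pow_succ, Nat.div_div_eq_div_mul]
  have d3 : z / 2 ^ (i+1) = z / 2 ^ i / 2 := by rw [pow_succ, Nat.div_div_eq_div_mul]
  have key : x / 2 ^ i / 2 = z / 2 ^ i / 2 := by rw [← d1, ← d3, e1, e2]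
  have : x / 2 ^ i / 2 < z / 2 ^ i / 2 := by
    have : x / 2 ^ i + 2 ≤ z / 2 ^ i := by omega
    calc x / 2 ^ i / 2 < x / 2 ^ i / 2 + 1 := Nat.lt_succ_self _
    _ = (x / 2 ^ i + 2) / 2 := by omega
    _ ≤ z / 2 ^ i / 2 := Nat.div_le_div_right this
  omega

/-- From local increase, global increase. -/
lemma mono_of_succ {h : ℕ → ℕ} {s : ℕ} (hinc : ∀ i, i + 1 < s → h i < h (i + 1)) :
    ∀ p q, p < q → q < s → h p < h q := by
  intro p q hpq hqs
  induction q with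
  | zero => omega
  | succ q ih =>
    rcases Nat.lt_or_ge p q with h' | h'
    · exact lt_trans (ih h' (by omega)) (hinc q (by omega))
    · have : p = q := by omega
      subst this; exact hinc p (by omega)

lemma self_le_of_succ {h : ℕ → ℕ} {s : ℕ} (hinc : ∀ i, i + 1 < s → h i < h (i + 1)) :
    ∀ i, i < s → i ≤ h i := by
  intro i his
  induction i with
  | zero => omega
  | succ i ih => have := hinc i (by omega); have := ih (by omega); omega

/-- Tuple of length `d+1`: first `d-1` entries from `w`, then `u`, then `x`. -/
def tup (d : ℕ) (w : Fin (d - 1) → ℕ) (u x : ℕ) : Fin (d + 1) → ℕ :=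
  fun t => if h : (t : ℕ) < d - 1 then w ⟨t, h⟩ else if (t : ℕ) = d - 1 then u else x

lemma exists_endHom (d c M R : ℕ) (hd : 1 ≤ d) (hc : 1 ≤ c)
    (C : (Fin (d + 1) → ℕ) → ℕ) (hC : ∀ x, C x < c)
    (hbig : M * (c ^ M ^ (d - 1)) ^ M ≤ R) :
    ∀ k, k ≤ M + 1 → ∃ (b : ℕ → ℕ) (S : Finset ℕ),
      (∀ x ∈ S, x ≤ R) ∧
      (∀ i, i < k → ∀ x ∈ S, b i < x) ∧
      (∀ i j, i < j → j < k → b i < b j) ∧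
      (∀ i, i < k → b i ≤ R) ∧
      R + 1 ≤ (S.card + k) * (c ^ M ^ (d - 1)) ^ k ∧
      ∀ j, j < k → ∀ v : Fin (d - 1) → ℕ, (∀ s, v s < j) →
        ∀ x y : ℕ,
          (x ∈ S ∨ ∃ l, j < l ∧ l < k ∧ x = b l) →
          (y ∈ S ∨ ∃ l, j < l ∧ l < k ∧ y = b l) →
          C (tup d (fun s => b (v s)) (b j) x) = C (tup d (fun s => b (v s)) (b j) y) := by
  set D := c ^ M ^ (d - 1) with hD
  have hD1 : 1 ≤ D := Nat.one_le_pow _ _ hc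
  intro k
  induction k with
  | zero =>
    intro _
    refine ⟨fun _ => 0, Finset.range (R + 1), ?_, ?_, ?_, ?_, ?_, ?_⟩
    · intro x hx; simpa using Nat.lt_succ_iff.mp (Finset.mem_range.mp hx)
    · omega
    · omega
    · omega
    · simp
    · omega
  | succ k ih =>
    intro hk1
    obtain ⟨b, S, hSR, hbltS, hbmono, hbR, hcard, hhom⟩ := ih (by omega)
    have hkM : k ≤ M := by omega
    -- S is nonempty
    have hne : S.Nonempty := by
      rw [← Finset.card_pos]
      by_contra hemp
      have hSc : S.card = 0 := by omega
      rw [hSc, Nat.zero_add] at hcard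
      have h1 : k * D ^ k ≤ M * D ^ M :=
        Nat.mul_le_mul hkM (Nat.pow_le_pow_right hD1 hkM)
      omega
    set bk := S.min' hne with hbk
    have hbkS : bk ∈ S := S.min'_mem hne
    -- the new b
    set b' : ℕ → ℕ := fun i => if i = k then bk else b i with hb'
    have hb'lt : ∀ i, i < k → b' i = b i := by intro i hi; simp [hb', Nat.ne_of_lt hi]
    -- classification
    classical
    set g : ℕ → ((Fin (d - 1) → Fin M) → Fin c) := fun x v =>
      if h : ∀ s, (v s : ℕ) < k then
        ⟨C (tup d (fun s => b (v s)) bk x) % c, Nat.mod_lt _ hc⟩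
      else ⟨0, hc⟩ with hg
    set s0 := S.erase bk with hs0
    have hs0card : s0.card = S.card - 1 := Finset.card_erase_of_mem hbkS
    set n := (S.card - 1) / D with hn
    have htne : (Finset.univ : Finset ((Fin (d - 1) → Fin M) → Fin c)).Nonempty := by
      refine ⟨fun _ => ⟨0, hc⟩, Finset.mem_univ _⟩
    have htcard : (Finset.univ : Finset ((Fin (d - 1) → Fin M) → Fin c)).card = D := by
      simp [hD, Fintype.card_fun]
    have hmul : (Finset.univ : Finset ((Fin (d - 1) → Fin M) → Fin c)).card * n ≤ s0.card := by
      rw [htcard, hs0card]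
      calc D * ((S.card - 1) / D) = (S.card - 1) / D * D := Nat.mul_comm _ _
        _ ≤ S.card - 1 := Nat.div_mul_le_self _ _
    obtain ⟨y0, -, hfib⟩ := Finset.exists_le_card_fiber_of_mul_le_card_of_maps_to
      (s := s0) (t := Finset.univ) (f := g) (n := n) (fun a _ => Finset.mem_univ _) htne hmul
    set S' := s0.filter (fun x => g x = y0) with hS'
    have hS's0 : S' ⊆ s0 := Finset.filter_subset _ _
    have hS'S : S' ⊆ S := hS's0.trans (Finset.erase_subset _ _)
    have hS'gt : ∀ x ∈ S', bk < x := by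
      intro x hx
      have hxs0 := hS's0 hx
      have hxne : x ≠ bk := Finset.ne_of_mem_erase hxs0
      exact lt_of_le_of_ne (S.min'_le x (hS'S hx)) (Ne.symm hxne)
    refine ⟨b', S', ?_, ?_, ?_, ?_, ?_, ?_⟩
    · intro x hx; exact hSR x (hS'S hx)
    · intro i hi x hx
      rcases Nat.lt_or_ge i k with h' | h'
      · rw [hb'lt i h']; exact hbltS i h' x (hS'S hx)
      · have : i = k := by omega
        subst this; simpa [hb'] using hS'gt x hx
    · intro i j hij hj
      rcases Nat.lt_or_ge j k with h' | h'
      · rw [hb'lt i (by omega), hb'lt j h']; exact hbmono i j hij h'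
      · have : j = k := by omega
        subst this
        rw [hb'lt i hij]
        simpa [hb'] using hbltS i hij bk hbkS
    · intro i hi
      rcases Nat.lt_or_ge i k with h' | h'
      · rw [hb'lt i h']; exact hbR i h'
      · have : i = k := by omega
        subst this; simpa [hb'] using hSR bk hbkS
    · -- cardinality
      have hfc : n ≤ S'.card := hfib
      have hSc1 : 1 ≤ S.card := Finset.card_pos.mpr hne
      have key : S.card ≤ (n + 1) * D := by
        have h1 : (S.card - 1) % D < D := Nat.mod_lt _ hD1
        have h2 : D * n + (S.card - 1) % D = S.card - 1 := Nat.div_add_mod _ _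
        have h3 : (n + 1) * D = D * n + D := by ring
        omega
      have step : (S.card + k) * D ^ k ≤ (n + (k + 1)) * D ^ (k + 1) := by
        have expand : (n + (k + 1)) * D ^ (k + 1) = ((n + 1) * D + k * D) * D ^ k := by ring
        have h3 : S.card + k ≤ (n + 1) * D + k * D := by
          have : k ≤ k * D := Nat.le_mul_of_pos_right _ hD1
          omega
        rw [expand]
        exact Nat.mul_le_mul_right _ h3
      calc R + 1 ≤ (S.card + k) * D ^ k := hcard
        _ ≤ (n + (k + 1)) * D ^ (k + 1) := step
        _ ≤ (S'.card + (k + 1)) * D ^ (k + 1) := Nat.mul_le_mul_right _ (by omega)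
    · -- homogeneity
      intro j hj v hv x y hx hy
      rcases Nat.lt_or_ge j k with h' | h'
      · -- reduce to previous invariant
        have hmem : ∀ z, (z ∈ S' ∨ ∃ l, j < l ∧ l < k + 1 ∧ z = b' l) →
            (z ∈ S ∨ ∃ l, j < l ∧ l < k ∧ z = b l) := by
          intro z hz
          rcases hz with hz | ⟨l, hl1, hl2, hz⟩
          · exact Or.inl (hS'S hz)
          · rcases Nat.lt_or_ge l k with h'' | h''
            · right; exact ⟨l, hl1, h'', by rwa [hb'lt l h''] at hz⟩
            · have : l = k := by omega
              subst this
              left; simp only [hb', if_pos rfl] at hz; subst hz; exact hbkS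
        have hbv : ∀ s : Fin (d - 1), b' (v s) = b (v s) := fun s => hb'lt _ (by have := hv s; omega)
        have hbj : b' j = b j := hb'lt j h'
        simp only [funext hbv, hbj]
        exact hhom j h' v hv x y (hmem x hx) (hmem y hy)
      · -- j = k : use the fiber
        have hjk : j = k := by omega
        subst hjk
        have hxS' : x ∈ S' := by
          rcases hx with hx | ⟨l, hl1, hl2, _⟩
          · exact hx
          · omega
        have hyS' : y ∈ S' := by
          rcases hy with hy | ⟨l, hl1, hl2, _⟩
          · exact hy
          · omega
        have hgx : g x = y0 := (Finset.mem_filter.mp hxS').2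
        have hgy : g y = y0 := (Finset.mem_filter.mp hyS').2
        set v' : Fin (d - 1) → Fin M := fun s => ⟨v s, lt_of_lt_of_le (hv s) (by omega)⟩ with hv'
        have hvk : ∀ s, ((v' s : ℕ)) < j := fun s => hv s
        have h1 := congrFun hgx v'
        have h2 := congrFun hgy v'
        rw [hg] at h1 h2
        simp only [dif_pos hvk] at h1 h2
        have hxy := congrArg Fin.val (h1.trans h2.symm)
        simp only at hxy
        have hxy' : (C (tup d (fun s => b (v s)) bk x)) % c
            = (C (tup d (fun s => b (v s)) bk y)) % c := hxy
        rw [Nat.mod_eq_of_lt (hC _), Nat.mod_eq_of_lt (hC _)] at hxy'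
        have hbj : b' j = bk := by simp [hb']
        have hbv : ∀ s : Fin (d - 1), b' (v s) = b (v s) := fun s => hb'lt _ (by have := hv s; omega)
        simp only [funext hbv, hbj]
        exact hxy'

lemma window_eq_tup (d : ℕ) (b f : ℕ → ℕ) (i : ℕ) :
    (fun t : Fin (d + 1) => b (f (i + ↑t)))
      = tup d (fun s : Fin (d - 1) => b (f (i + ↑s))) (b (f (i + (d - 1)))) (b (f (i + d))) := by
  funext t
  unfold tup
  by_cases h1 : (t : ℕ) < d - 1
  · rw [dif_pos h1]
  · by_cases h2 : (t : ℕ) = d - 1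
    · rw [dif_neg h1, if_pos h2, h2]
    · have ht : (t : ℕ) = d := by have := t.isLt; omega
      rw [dif_neg h1, if_neg h2, ht]

/-- Extend a `d+1`-dim coloring to a `d`-dim one using an end-homogeneous sequence `b`. -/
def colext (d M : ℕ) (b : ℕ → ℕ) (C : (Fin (d + 1) → ℕ) → ℕ) : (Fin d → ℕ) → ℕ :=
  fun x => C (fun t => if ht : (t : ℕ) < d then b (x ⟨t, ht⟩) else b M)

lemma colext_window (d M : ℕ) (hd : 1 ≤ d) (b : ℕ → ℕ) (C : (Fin (d + 1) → ℕ) → ℕ)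
    (f : ℕ → ℕ) (i : ℕ) :
    colext d M b C (fun s : Fin d => f (i + ↑s))
      = C (tup d (fun s : Fin (d - 1) => b (f (i + ↑s))) (b (f (i + (d - 1)))) (b M)) := by
  unfold colext
  refine congrArg C ?_
  funext t
  unfold tup
  by_cases h1 : (t : ℕ) < d - 1
  · rw [dif_pos (by omega : (t : ℕ) < d), dif_pos h1]
  · by_cases h2 : (t : ℕ) = d - 1
    · rw [dif_pos (by omega : (t : ℕ) < d), dif_neg h1, if_pos h2]
      show b (f (i + (t : ℕ))) = _
      rw [h2]
    · have ht : (t : ℕ) = d := by have := t.isLt; omega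
      rw [dif_neg (by omega : ¬ (t : ℕ) < d), dif_neg h1, if_neg h2]

/-- Inductive upper bound: `wr_c^d(m) ≤ M` implies `wr_c^{d+1}(m) ≤ 2^(M^(d+1))`. -/
theorem wr_dim_step (d c m M : ℕ) (hd : 1 ≤ d) (hc : 2 ≤ c)
    (h : wrdAt d c M m) : wrdAt (d + 1) c (2 ^ M ^ (d + 1)) m := by
  intro C hC
  set R := 2 ^ M ^ (d + 1) with hR
  -- m ≤ M
  obtain ⟨f0, hf0b, hf0w⟩ := h (fun _ => 0) (fun x => by show (0:ℕ) < c; omega)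
  have hmM : m ≤ M := by
    have h1 : m ≤ f0 m := self_le_of_succ hf0w.1 m (Nat.lt_succ_self m)
    have h2 : f0 m ≤ M := hf0b m (Nat.lt_succ_self m)
    omega
  have hMR : M ≤ R := by
    rcases Nat.eq_zero_or_pos M with h0 | h0
    · rw [h0]; exact Nat.zero_le _
    · have h1 : M ≤ M ^ (d + 1) := Nat.le_self_pow (by omega) M
      have h2 : M ^ (d + 1) < 2 ^ M ^ (d + 1) := Nat.lt_two_pow_self
      omega
  rcases le_or_gt m d with hmd | hmd
  · -- trivial case: no color conditions
    refine ⟨fun i => i, ?_, fun i _ => Nat.lt_succ_self i, ?_⟩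
    · intro i hi
      show i ≤ R
      omega
    · intro i hi
      exact absurd hi (by omega)
  · -- main case : m ≥ d + 1
    have hkey : 2 * c ≤ 2 ^ M ∧ 1 ≤ M := by
      rcases eq_or_lt_of_le hd with hd1 | hd2
      · -- d = 1 : use mod-c coloring
        obtain rfl : d = 1 := hd1.symm
        obtain ⟨f, hfb, hfw⟩ := h (fun x => x 0 % c) (fun x => Nat.mod_lt _ (by omega))
        obtain ⟨hfinc, hfcol⟩ := hfw
        have grow : ∀ i, i < m + 1 → f 0 + c * i ≤ f i := by
          intro i hi
          induction i with
          | zero => omega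
          | succ i ih =>
            have hcol := hfcol i (by omega)
            simp only at hcol
            have hmod : f i % c = f (i + 1) % c := by simpa using hcol
            have hlt : f i < f (i + 1) := hfinc i (by omega)
            have hdvd : c ∣ f (i + 1) - f i := (Nat.modEq_iff_dvd' hlt.le).mp hmod
            have hge : c ≤ f (i + 1) - f i := Nat.le_of_dvd (by omega) hdvd
            have := ih (by omega)
            have h5 : f 0 + c * i + c ≤ f (i + 1) := by omega
            have h6 : c * (i + 1) = c * i + c := by ring
            omega
        have h1 : f 0 + c * m ≤ f m := grow m (Nat.lt_succ_self m)
        have h2 : f m ≤ M := hfb m (Nat.lt_succ_self m)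
        have h3 : c * 2 ≤ c * m := Nat.mul_le_mul_left c (by omega)
        have h4 : M < 2 ^ M := (Nat.lt_two_pow_self (n := M))
        omega
      · -- d ≥ 2 : use the highest-differing-bit coloring
        rcases le_or_gt (2 ^ c) M with hcM | hcM
        · have h1 : c < 2 ^ c := (Nat.lt_two_pow_self (n := c))
          have h2 : M - 1 < 2 ^ (M - 1) := (Nat.lt_two_pow_self (n := (M - 1)))
          have h3 : 2 ^ (M - 1) * 2 = 2 ^ M := by
            rw [← pow_succ]
            congr 1
            have : 4 ≤ 2 ^ c := by
              calc (4 : ℕ) = 2 ^ 2 := by norm_num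
              _ ≤ 2 ^ c := Nat.pow_le_pow_right (by norm_num) hc
            omega
          have : 4 ≤ 2 ^ c := by
            calc (4 : ℕ) = 2 ^ 2 := by norm_num
            _ ≤ 2 ^ c := Nat.pow_le_pow_right (by norm_num) hc
          omega
        · exfalso
          obtain ⟨f, hfb, hfw⟩ := h
            (fun x => if hx : x ⟨0, by omega⟩ < x ⟨1, by omega⟩ ∧ x ⟨1, by omega⟩ ≤ M
              then dlt (x ⟨0, by omega⟩) (x ⟨1, by omega⟩) else 0)
            (fun x => by
              beta_reduce
              split_ifs with hx
              · exact dlt_lt hx.1 (lt_of_le_of_lt hx.2 hcM)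
              · omega)
          obtain ⟨hfinc, hfcol⟩ := hfw
          have hcol := hfcol 0 (by omega)
          simp only at hcol
          have m01 : ∀ p q : ℕ, p < q → q < m + 1 → f p < f q := mono_of_succ hfinc
          have g1 : f (0 + (0 : ℕ)) < f (0 + (1 : ℕ)) := m01 _ _ (by omega) (by omega)
          have g1b : f (0 + (1 : ℕ)) ≤ M := hfb _ (by omega)
          have g2 : f (1 + (0 : ℕ)) < f (1 + (1 : ℕ)) := m01 _ _ (by omega) (by omega)
          have g2b : f (1 + (1 : ℕ)) ≤ M := hfb _ (by omega)
          rw [dif_pos ⟨g1, g1b⟩, dif_pos ⟨g2, g2b⟩] at hcol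
          exact dlt_ne (m01 0 1 (by omega) (by omega)) (m01 1 (1 + 1) (by omega) (by omega)) hcol
    obtain ⟨h2c, hM1⟩ := hkey
    -- the counting bound
    have hbig : M * (c ^ M ^ (d - 1)) ^ M ≤ R := by
      have hc2 : c ≤ 2 ^ (M - 1) := by
        have h3 : 2 ^ (M - 1) * 2 = 2 ^ M := by
          rw [← pow_succ]; congr 1; omega
        omega
      have e1 : (c ^ M ^ (d - 1)) ^ M = c ^ M ^ d := by
        rw [← pow_mul]
        congr 1
        calc M ^ (d - 1) * M = M ^ (d - 1 + 1) := (pow_succ M (d - 1)).symm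
        _ = M ^ d := by congr 1; omega
      have h2 : c ^ M ^ d ≤ (2 ^ (M - 1)) ^ M ^ d := Nat.pow_le_pow_left hc2 _
      have e2 : (2 ^ (M - 1)) ^ M ^ d = 2 ^ ((M - 1) * M ^ d) := by rw [← pow_mul]
      have h3 : M ≤ 2 ^ M ^ d := by
        have ha : M ≤ M ^ d := Nat.le_self_pow (by omega) M
        have hb : M < 2 ^ M := (Nat.lt_two_pow_self (n := M))
        have hcc : 2 ^ M ≤ 2 ^ M ^ d := Nat.pow_le_pow_right (by norm_num) ha
        omega
      have eexp : M ^ d + (M - 1) * M ^ d = M ^ (d + 1) := by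
        obtain ⟨M', rfl⟩ : ∃ M', M = M' + 1 := ⟨M - 1, by omega⟩
        simp only [Nat.add_sub_cancel]
        rw [pow_succ]
        ring
      calc M * (c ^ M ^ (d - 1)) ^ M = M * c ^ M ^ d := by rw [e1]
        _ ≤ 2 ^ M ^ d * 2 ^ ((M - 1) * M ^ d) := Nat.mul_le_mul h3 (h2.trans_eq e2)
        _ = 2 ^ (M ^ d + (M - 1) * M ^ d) := (pow_add 2 _ _).symm
        _ = R := by rw [hR, eexp]
    -- build the end-homogeneous sequence
    obtain ⟨b, S, hSR, hbltS, hbmono, hbR, hcard, hhom⟩ :=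
      exists_endHom d c M R hd (by omega) C hC hbig (M + 1) (le_refl _)
    -- apply the hypothesis to the extended coloring
    obtain ⟨f, hfb, hfw⟩ := h (colext d M b C) (fun x => hC _)
    obtain ⟨hfinc, hfcol⟩ := hfw
    have hmono : ∀ p q : ℕ, p < q → q < m + 1 → f p < f q := mono_of_succ hfinc
    refine ⟨fun i => b (f i), ?_, ?_, ?_⟩
    · intro i hi
      exact hbR (f i) (by have := hfb i hi; omega)
    · intro i hi
      exact hbmono (f i) (f (i + 1)) (hfinc i hi) (by have := hfb (i + 1) hi; omega)
    · intro i hi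
      show C (fun t : Fin (d + 1) => b (f (i + ↑t))) = C (fun t : Fin (d + 1) => b (f (i + 1 + ↑t)))
      rw [window_eq_tup d b f i, window_eq_tup d b f (i + 1)]
      have step1 : C (tup d (fun s : Fin (d - 1) => b (f (i + ↑s))) (b (f (i + (d - 1)))) (b (f (i + d))))
          = C (tup d (fun s : Fin (d - 1) => b (f (i + ↑s))) (b (f (i + (d - 1)))) (b M)) := by
        refine hhom (f (i + (d - 1))) (by have := hfb (i + (d - 1)) (by omega); omega)
          (fun s : Fin (d - 1) => f (i + ↑s))
          (fun s => hmono (i + ↑s) (i + (d - 1)) (by have := s.isLt; omega) (by omega))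
          (b (f (i + d))) (b M) ?_ ?_
        · exact Or.inr ⟨f (i + d), hmono _ _ (by omega) (by omega),
            (by have := hfb (i + d) (by omega); omega), rfl⟩
        · refine Or.inr ⟨M, ?_, by omega, rfl⟩
          have h1 : f (i + (d - 1)) < f (i + d) := hmono _ _ (by omega) (by omega)
          have h2 : f (i + d) ≤ M := hfb (i + d) (by omega)
          omega
      have step2 : C (tup d (fun s : Fin (d - 1) => b (f (i + 1 + ↑s))) (b (f (i + 1 + (d - 1)))) (b (f (i + 1 + d))))
          = C (tup d (fun s : Fin (d - 1) => b (f (i + 1 + ↑s))) (b (f (i + 1 + (d - 1)))) (b M)) := by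
        refine hhom (f (i + 1 + (d - 1))) (by have := hfb (i + 1 + (d - 1)) (by omega); omega)
          (fun s : Fin (d - 1) => f (i + 1 + ↑s))
          (fun s => hmono (i + 1 + ↑s) (i + 1 + (d - 1)) (by have := s.isLt; omega) (by omega))
          (b (f (i + 1 + d))) (b M) ?_ ?_
        · exact Or.inr ⟨f (i + 1 + d), hmono _ _ (by omega) (by omega),
            (by have := hfb (i + 1 + d) (by omega); omega), rfl⟩
        · refine Or.inr ⟨M, ?_, by omega, rfl⟩
          have h1 : f (i + 1 + (d - 1)) < f (i + 1 + d) := hmono _ _ (by omega) (by omega)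
          have h2 : f (i + 1 + d) ≤ M := hfb (i + 1 + d) (by omega)
          omega
      calc C (tup d (fun s : Fin (d - 1) => b (f (i + ↑s))) (b (f (i + (d - 1)))) (b (f (i + d))))
          = C (tup d (fun s : Fin (d - 1) => b (f (i + ↑s))) (b (f (i + (d - 1)))) (b M)) := step1
        _ = colext d M b C (fun s : Fin d => f (i + ↑s)) := (colext_window d M hd b C f i).symm
        _ = colext d M b C (fun s : Fin d => f (i + 1 + ↑s)) := hfcol i (by omega)
        _ = C (tup d (fun s : Fin (d - 1) => b (f (i + 1 + ↑s))) (b (f (i + 1 + (d - 1)))) (b M)) :=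
            colext_window d M hd b C f (i + 1)
        _ = C (tup d (fun s : Fin (d - 1) => b (f (i + 1 + ↑s))) (b (f (i + 1 + (d - 1)))) (b (f (i + 1 + d)))) := step2.symm
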